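/- Let a, b, c, d be pairwise distinct positive integers with a < b and c < d. Then the closed segment from (a, a!) to (b, b!) and the closed segment from (c, c!) to (d, d!) intersect if and only if the pairs interleave, i.e. a < c < b < d or c < a < d < b. -/

import Mathlib

/-- The point `(x, x!)` in the plane. -/
noncomputable def factPt (x : ℕ) : ℝ × ℝ := ((x : ℝ), (Nat.factorial x : ℝ))

namespace FactSeg

noncomputable def F (n : ℕ) : ℝ := (Nat.factorial n : ℝ)

lemma F_pos (n : ℕ) : 0 < F n := by
  unfold F; exact_mod_cast n.factorial_pos

lemma F_mono {m n : ℕ} (h : m ≤ n) : F m ≤ F n := by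
  unfold F; exact_mod_cast Nat.factorial_le h

lemma F_diff (n : ℕ) : F (n + 1) - F n = n * F n := by
  unfold F
  push_cast [Nat.factorial_succ]
  ring

lemma diff_mono {m n : ℕ} (h : m ≤ n) : F (m + 1) - F m ≤ F (n + 1) - F n := by
  rw [F_diff, F_diff]
  have h1 := F_mono h
  have h2 := F_pos m
  have h3 : (m : ℝ) ≤ n := by exact_mod_cast h
  have h4 : (0:ℝ) ≤ m := by positivity
  nlinarith

lemma diff_strict {m n : ℕ} (hm : 1 ≤ m) (h : m < n) :
    F (m + 1) - F m < F (n + 1) - F n := by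
  rw [F_diff, F_diff]
  have h1 := F_mono h.le
  have h2 := F_pos m
  have h3 : (m : ℝ) < n := by exact_mod_cast h
  have h4 : (1:ℝ) ≤ m := by exact_mod_cast hm
  nlinarith

lemma upper (u v : ℕ) (hv : u < v) :
    F v - F u ≤ ((v : ℝ) - u) * (F v - F (v - 1)) := by
  induction v, hv using Nat.le_induction with
  | base =>
    have h : ((u + 1 : ℕ) : ℝ) - u = 1 := by push_cast; ring
    simp only [Nat.succ_eq_add_one, Nat.add_sub_cancel, h, one_mul]
    exact le_rfl
  | succ v hv ih =>
    have hd : F v - F (v - 1) ≤ F (v + 1) - F v := by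
      have := diff_mono (m := v - 1) (n := v) (Nat.sub_le v 1)
      rwa [Nat.sub_add_cancel (by omega : 1 ≤ v)] at this
    have hvu : (u : ℝ) ≤ v := by exact_mod_cast Nat.le_of_succ_le hv
    have h : ((v + 1 : ℕ) : ℝ) = (v : ℝ) + 1 := by push_cast; ring
    rw [h, Nat.add_sub_cancel]
    nlinarith

lemma lower (v w : ℕ) (hw : v < w) :
    ((w : ℝ) - v) * (F (v + 1) - F v) ≤ F w - F v := by
  induction w, hw using Nat.le_induction with
  | base =>
    have h : ((v + 1 : ℕ) : ℝ) - v = 1 := by push_cast; ring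
    simp only [Nat.succ_eq_add_one, h, one_mul]
    exact le_rfl
  | succ w hw ih =>
    have hd : F (v + 1) - F v ≤ F (w + 1) - F w := diff_mono (by omega)
    have hvw : (v : ℝ) ≤ w := by exact_mod_cast Nat.le_of_succ_le hw
    have h : ((w + 1 : ℕ) : ℝ) = (w : ℝ) + 1 := by push_cast; ring
    rw [h]
    nlinarith

lemma slope {u v w : ℕ} (hu : 1 ≤ u) (huv : u < v) (hvw : v < w) :
    (F v - F u) * ((w : ℝ) - v) < (F w - F v) * ((v : ℝ) - u) := by
  have h1 := upper u v huv
  have h2 := lower v w hvw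
  have h3 : F v - F (v - 1) < F (v + 1) - F v := by
    have := diff_strict (m := v - 1) (n := v) (by omega) (by omega)
    rwa [Nat.sub_add_cancel (by omega : 1 ≤ v)] at this
  have h4 : (u : ℝ) < v := by exact_mod_cast huv
  have h5 : (v : ℝ) < w := by exact_mod_cast hvw
  nlinarith [mul_le_mul_of_nonneg_right h1 (by linarith : (0:ℝ) ≤ (w:ℝ) - v),
    mul_le_mul_of_nonneg_left h2 (by linarith : (0:ℝ) ≤ (v:ℝ) - u),
    mul_lt_mul_of_pos_left h3 (by nlinarith : (0:ℝ) < ((v:ℝ) - u) * ((w:ℝ) - v))]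

noncomputable def chord (a b : ℕ) (x : ℝ) : ℝ :=
  F a + (x - a) * ((F b - F a) / ((b : ℝ) - a))

lemma chord_left (a b : ℕ) : chord a b (a : ℝ) = F a := by
  unfold chord; ring

lemma chord_right {a b : ℕ} (hab : a < b) : chord a b (b : ℝ) = F b := by
  have h : ((b : ℝ) - a) ≠ 0 := by
    have : (a : ℝ) < b := by exact_mod_cast hab
    linarith
  unfold chord; field_simp; ring

lemma chord_affine (a b : ℕ) (s x y : ℝ) :
    chord a b ((1 - s) * x + s * y) = (1 - s) * chord a b x + s * chord a b y := by
  unfold chord; ring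

lemma chord_eq {a b : ℕ} (hab : a < b) (x : ℝ) :
    chord a b x = ((b : ℝ) - x) / ((b : ℝ) - a) * F a + (x - a) / ((b : ℝ) - a) * F b := by
  have hne : ((b : ℝ) - a) ≠ 0 := by
    have : (a : ℝ) < b := by exact_mod_cast hab
    linarith
  unfold chord
  field_simp
  ring

lemma chord_gt {a c b : ℕ} (ha : 1 ≤ a) (h1 : a < c) (h2 : c < b) :
    F c < chord a b (c : ℝ) := by
  have key := slope ha h1 h2
  have hba : (0 : ℝ) < (b : ℝ) - a := by
    have : (a : ℝ) < b := by exact_mod_cast h1.trans h2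
    linarith
  rw [chord_eq (h1.trans h2), div_mul_eq_mul_div, div_mul_eq_mul_div,
    ← add_div, lt_div_iff₀ hba]
  nlinarith [key]

lemma mem_iff {a b : ℕ} (hab : a < b) (p : ℝ × ℝ) :
    p ∈ segment ℝ (factPt a) (factPt b) ↔
      (a : ℝ) ≤ p.1 ∧ p.1 ≤ (b : ℝ) ∧ p.2 = chord a b p.1 := by
  have hba : (0 : ℝ) < (b : ℝ) - a := by
    have : (a : ℝ) < b := by exact_mod_cast hab
    linarith
  constructor
  · rintro ⟨u, t, hu, ht, hut, rfl⟩
    have hfst : (u • factPt a + t • factPt b).1 = u * a + t * b := by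
      simp [factPt]
    have hsnd : (u • factPt a + t • factPt b).2 = u * F a + t * F b := by
      simp [factPt, F]
    rw [hfst, hsnd]
    have hu' : u = 1 - t := by linarith
    subst hu'
    refine ⟨by nlinarith, by nlinarith, ?_⟩
    unfold chord
    field_simp
    ring
  · rintro ⟨h1, h2, h3⟩
    refine ⟨1 - (p.1 - a) / ((b : ℝ) - a), (p.1 - a) / ((b : ℝ) - a), ?_, ?_, by ring, ?_⟩
    · have : (p.1 - a) / ((b : ℝ) - a) ≤ 1 := by
        rw [div_le_one hba]; linarith
      linarith
    · exact div_nonneg (by linarith) hba.le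
    · have hne : ((b : ℝ) - a) ≠ 0 := ne_of_gt hba
      have e1 : ((1 - (p.1 - a) / ((b:ℝ) - a)) • factPt a + ((p.1 - a) / ((b:ℝ) - a)) • factPt b).1 = p.1 := by
        simp only [factPt, Prod.smul_mk, Prod.mk_add_mk, smul_eq_mul]
        field_simp
        ring
      have e2 : ((1 - (p.1 - a) / ((b:ℝ) - a)) • factPt a + ((p.1 - a) / ((b:ℝ) - a)) • factPt b).2 = p.2 := by
        simp only [factPt, Prod.smul_mk, Prod.mk_add_mk, smul_eq_mul]
        rw [h3]
        unfold chord F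
        field_simp
        ring
      exact Prod.ext e1 e2

lemma no_disjoint {a b c d : ℕ} (hab : a < b) (h : b < c) (hcd : c < d) :
    ¬ (segment ℝ (factPt a) (factPt b) ∩ segment ℝ (factPt c) (factPt d)).Nonempty := by
  rintro ⟨p, hp1, hp2⟩
  rw [mem_iff hab] at hp1
  rw [mem_iff hcd] at hp2
  have hbc : (b : ℝ) < c := by exact_mod_cast h
  linarith [hp1.2.1, hp2.1]

lemma no_nested {a b c d : ℕ} (ha : 1 ≤ a) (h1 : a < c) (h2 : c < d) (h3 : d < b) :
    ¬ (segment ℝ (factPt a) (factPt b) ∩ segment ℝ (factPt c) (factPt d)).Nonempty := by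
  rintro ⟨p, hp1, hp2⟩
  have hab : a < b := h1.trans (h2.trans h3)
  rw [mem_iff hab] at hp1
  rw [mem_iff h2] at hp2
  obtain ⟨hpa, hpb, hpe⟩ := hp1
  obtain ⟨hpc, hpd, hpe'⟩ := hp2
  have hdc : (0 : ℝ) < (d : ℝ) - c := by
    have : (c : ℝ) < d := by exact_mod_cast h2
    linarith
  set s : ℝ := (p.1 - c) / ((d : ℝ) - c) with hs
  have hs0 : 0 ≤ s := div_nonneg (by linarith) hdc.le
  have hs1 : s ≤ 1 := by rw [hs, div_le_one hdc]; linarith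
  have hx : p.1 = (1 - s) * c + s * d := by
    rw [hs]; field_simp; ring
  have hgc : F c < chord a b (c : ℝ) := chord_gt ha h1 (h2.trans h3)
  have hgd : F d < chord a b (d : ℝ) := chord_gt ha (h1.trans h2) h3
  have e1 : chord a b p.1 = (1 - s) * chord a b (c : ℝ) + s * chord a b (d : ℝ) := by
    rw [hx, chord_affine]
  have e2 : chord c d p.1 = (1 - s) * F c + s * F d := by
    rw [hx, chord_affine, chord_left, chord_right h2]
  have hlt : chord c d p.1 < chord a b p.1 := by
    rw [e1, e2]
    rcases eq_or_lt_of_le hs0 with hz | hz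
    · rw [← hz]; simpa using hgc
    · nlinarith
  rw [← hpe, ← hpe'] at hlt
  exact lt_irrefl _ hlt

lemma yes_interleave {a b c d : ℕ} (ha : 1 ≤ a) (hc : 1 ≤ c)
    (h1 : a < c) (h2 : c < b) (h3 : b < d) :
    (segment ℝ (factPt a) (factPt b) ∩ segment ℝ (factPt c) (factPt d)).Nonempty := by
  have hab : a < b := h1.trans h2
  have hcd : c < d := h2.trans h3
  set g : ℝ → ℝ := fun x => chord a b x - chord c d x with hg
  have hgc : 0 < g (c : ℝ) := by
    have := chord_gt ha h1 h2
    simp only [hg, chord_left]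
    linarith
  have hgb : g (b : ℝ) < 0 := by
    have := chord_gt hc h2 h3
    simp only [hg, chord_right hab]
    linarith
  have hcb : (c : ℝ) ≤ (b : ℝ) := by exact_mod_cast h2.le
  have hcont : ContinuousOn g (Set.Icc (c : ℝ) (b : ℝ)) := by
    unfold g
    unfold chord
    fun_prop
  have hsub := intermediate_value_Icc' hcb hcont
  obtain ⟨x, hx, hgx⟩ := hsub ⟨hgb.le, hgc.le⟩
  have hchords : chord a b x = chord c d x := by
    have : chord a b x - chord c d x = 0 := hgx
    linarith
  refine ⟨(x, chord a b x), ?_, ?_⟩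
  · rw [mem_iff hab]
    have hac : (a : ℝ) ≤ c := by exact_mod_cast h1.le
    exact ⟨le_trans hac hx.1, hx.2, rfl⟩
  · rw [mem_iff hcd]
    have hbd : (b : ℝ) ≤ d := by exact_mod_cast h3.le
    exact ⟨hx.1, le_trans hx.2 hbd, hchords⟩

end FactSeg

open FactSeg in
theorem stmt_4 (a b c d : ℕ) (ha : 0 < a) (hb : 0 < b) (hc : 0 < c) (hd : 0 < d)
    (hab : a < b) (hcd : c < d)
    (hac : a ≠ c) (had : a ≠ d) (hbc : b ≠ c) (hbd : b ≠ d) :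
    (segment ℝ (factPt a) (factPt b) ∩ segment ℝ (factPt c) (factPt d)).Nonempty ↔
    ((a < c ∧ c < b ∧ b < d) ∨ (c < a ∧ a < d ∧ d < b)) := by
  rcases lt_or_gt_of_ne hac with h | h
  · rcases lt_trichotomy b c with h' | h' | h'
    · have hni := no_disjoint hab h' hcd
      constructor
      · exact fun hn => absurd hn hni
      · rintro (⟨_, h2, _⟩ | ⟨h1, _, _⟩) <;> omega
    · exact absurd h' hbc
    · rcases lt_trichotomy b d with h'' | h'' | h''
      · constructor
        · intro _; exact Or.inl ⟨h, h', h''⟩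
        · intro _; exact yes_interleave ha hc h h' h''
      · exact absurd h'' hbd
      · have hni := no_nested ha h hcd h''
        constructor
        · exact fun hn => absurd hn hni
        · rintro (⟨_, _, h3⟩ | ⟨h1, _, _⟩) <;> omega
  · rw [Set.inter_comm]
    rcases lt_trichotomy d a with h' | h' | h'
    · have hni := no_disjoint hcd h' hab
      constructor
      · exact fun hn => absurd hn hni
      · rintro (⟨h1, _, _⟩ | ⟨_, h2, _⟩) <;> omega
    · exact absurd h'.symm had
    · rcases lt_trichotomy d b with h'' | h'' | h''
      · constructor
        · intro _; exact Or.inr ⟨h, h', h''⟩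
        · intro _; exact yes_interleave hc ha h h' h''
      · exact absurd h''.symm hbd
      · have hni := no_nested hc h hab h''
        constructor
        · exact fun hn => absurd hn hni
        · rintro (⟨h1, _, _⟩ | ⟨_, _, h3⟩) <;> omega
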